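/- (Completeness: Sufficiency.) Suppose vf t = apv t for all traces t, where r is reflexive, transitive, and satisfies r t t' → cor t' ⊆ cor t. Then for every t and every S ∈ vf t, there exists a trace t' with vf t' = {S}, cor t' ⊆ S, and r t t'. -/
import Mathlib


theorem stmt8 {T P : Type*} (sat : T → Prop) (cor : T → Finset P)
    (r : T → T → Prop) (hrefl : ∀ t, r t t)
    (htrans : ∀ a b c, r a b → r b c → r a c)
    (hcor : ∀ t t', r t t' → cor t' ⊆ cor t)
    (vf : T → Set (Finset P))
    (apv : T → Set (Finset P))
    (happv : ∀ t, apv t = {S | ¬ sat t ∧ (∃ t', r t t' ∧ cor t' = S ∧ ¬ sat t') ∧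
      ¬ ∃ t'', r t t'' ∧ cor t'' ⊂ S ∧ ¬ sat t''})
    (heq : ∀ t, vf t = apv t) :
    ∀ t S, S ∈ vf t → ∃ t', vf t' = {S} ∧ cor t' ⊆ S ∧ r t t' := by
  intro t S hS
  rw [heq, happv] at hS
  obtain ⟨hnsat, ⟨t1, hr1, hc1, hs1⟩, hmin⟩ := hS
  refine ⟨t1, ?_, hc1.le, hr1⟩
  rw [heq, happv]
  ext S'
  simp only [Set.mem_setOf_eq, Set.mem_singleton_iff]
  constructor
  · rintro ⟨-, ⟨t2, hr2, hc2, hs2⟩, -⟩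
    have hsub : S' ⊆ S := hc2 ▸ hc1 ▸ hcor _ _ hr2
    by_contra hne
    exact hmin ⟨t2, htrans _ _ _ hr1 hr2, hc2 ▸ lt_of_le_of_ne (α := Finset P) hsub hne, hs2⟩
  · rintro rfl
    exact ⟨hs1, ⟨t1, hrefl t1, hc1, hs1⟩,
      fun ⟨t2, hr2, hc2, hs2⟩ => hmin ⟨t2, htrans _ _ _ hr1 hr2, hc2, hs2⟩⟩
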